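/- For n = 1, 2 let (λ⁽ⁿ⁾, S⁽ⁿ⁾) be admissible pairs and let X⁽ⁿ⁾ be the solution of the graph wave equation Ẍ⁽ⁿ⁾ − Δ X⁽ⁿ⁾ = λ⁽ⁿ⁾ S⁽ⁿ⁾ with the same initial data X⁽ⁿ⁾(0) = a, Ẋ⁽ⁿ⁾(0) = b. If {k₁, …, k_ℓ} is a strategic set of nodes and x_k⁽¹⁾(t) = x_k⁽²⁾(t) for all t ∈ (0, T) and all k ∈ {k₁, …, k_ℓ}, then X⁽¹⁾(T) = X⁽²⁾(T). (Theorem 4.1) -/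

import Mathlib

open Matrix Set MeasureTheory

/-- `(λ, S)` is an admissible source pair on `(0,T)`: `λ ∈ L²(0,T)` vanishes a.e. on some
final interval `(T⁰, T)`, and `S` is a standard basis vector of `ℝ^N`. -/
def AdmissiblePair (N : ℕ) (T : ℝ) (lam : ℝ → ℝ) (S : Fin N → ℝ) : Prop :=
  MemLp lam 2 (volume.restrict (Ioo (0:ℝ) T)) ∧
  (∃ T0 ∈ Ioo (0:ℝ) T, ∀ᵐ t ∂(volume.restrict (Ioo T0 T)), lam t = 0) ∧
  ∃ s : Fin N, S = Pi.single s 1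

/-- `X` solves the graph wave equation `Ẍ − ΔX = λ S`, `X(0) = a`, `Ẋ(0) = b` on `[0,T]`,
in the Volterra integral form. -/
def IsWaveSolution {N : ℕ} (Δ : Matrix (Fin N) (Fin N) ℝ) (T : ℝ) (lam : ℝ → ℝ)
    (S a b : Fin N → ℝ) (X : ℝ → Fin N → ℝ) : Prop :=
  ContinuousOn X (Icc 0 T) ∧
  ∀ t ∈ Icc (0:ℝ) T, X t = a + t • b + ∫ s in (0:ℝ)..t, (t - s) • (Δ.mulVec (X s) + lam s • S)

namespace FinalStateAux

variable {N : ℕ}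

noncomputable def dotCLM (w : Fin N → ℝ) : (Fin N → ℝ) →L[ℝ] ℝ :=
  LinearMap.toContinuousLinearMap
    { toFun := fun x => x ⬝ᵥ w
      map_add' := fun x y => by simp [add_dotProduct]
      map_smul' := fun c x => by simp [smul_dotProduct] }

@[simp] lemma dotCLM_apply (w x : Fin N → ℝ) : dotCLM w x = x ⬝ᵥ w := rfl

lemma dot_intervalIntegral {F : ℝ → Fin N → ℝ} {a b : ℝ} (w : Fin N → ℝ)
    (hF : IntervalIntegrable F volume a b) :
    (∫ s in a..b, F s) ⬝ᵥ w = ∫ s in a..b, F s ⬝ᵥ w := by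
  rw [← dotCLM_apply w, ← ContinuousLinearMap.intervalIntegral_comp_comm _ hF]
  simp

lemma scalar_volterra (Δ : Matrix (Fin N) (Fin N) ℝ) (hsymm : Δ.IsSymm)
    {T : ℝ} {lam : ℝ → ℝ} {S a b : Fin N → ℝ} {X : ℝ → Fin N → ℝ}
    (hlam : IntegrableOn lam (Ioc 0 T) volume)
    (hX : IsWaveSolution Δ T lam S a b X)
    {ωn : ℝ} {vn : Fin N → ℝ} (heig : Δ.mulVec vn = (-ωn ^ 2) • vn) :
    ∀ t ∈ Icc (0:ℝ) T, X t ⬝ᵥ vn =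
      a ⬝ᵥ vn + t * (b ⬝ᵥ vn) +
        ∫ s in (0:ℝ)..t, (t - s) * (-ωn ^ 2 * (X s ⬝ᵥ vn) + lam s * (S ⬝ᵥ vn)) := by
  obtain ⟨hXc, hXeq⟩ := hX
  intro t ht
  obtain ⟨ht0, htT⟩ := ht
  have huIcc : uIcc (0:ℝ) t = Icc 0 t := uIcc_of_le ht0
  -- dot identity for symmetric matrix
  have hdot : ∀ x : Fin N → ℝ, Δ.mulVec x ⬝ᵥ vn = -ωn ^ 2 * (x ⬝ᵥ vn) := by
    intro x
    calc Δ.mulVec x ⬝ᵥ vn = vn ⬝ᵥ Δ.mulVec x := dotProduct_comm _ _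
    _ = Δ.vecMul vn ⬝ᵥ x := dotProduct_mulVec _ _ _
    _ = Δ.mulVec vn ⬝ᵥ x := by rw [← Matrix.mulVec_transpose, hsymm.eq]
    _ = -ωn ^ 2 * (x ⬝ᵥ vn) := by rw [heig, smul_dotProduct, dotProduct_comm, smul_eq_mul]
  -- interval integrability of the two pieces
  have hlamt : IntervalIntegrable lam volume 0 t :=
    (intervalIntegrable_iff_integrableOn_Ioc_of_le ht0).2
      (hlam.mono_set (Ioc_subset_Ioc_right htT))
  have hcontX : ContinuousOn X (Icc 0 t) := hXc.mono (Icc_subset_Icc_right htT)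
  have hmulVecCont : Continuous (fun x : Fin N → ℝ => Δ.mulVec x) := by
    have := LinearMap.continuous_of_finiteDimensional (Δ.mulVecLin)
    exact this
  have hF1 : IntervalIntegrable (fun s => (t - s) • Δ.mulVec (X s)) volume 0 t := by
    apply ContinuousOn.intervalIntegrable
    rw [huIcc]
    exact (continuous_const.sub continuous_id).continuousOn.smul
      (hmulVecCont.comp_continuousOn hcontX)
  have hmul : IntervalIntegrable (fun s => (t - s) * lam s) volume 0 t :=
    hlamt.continuousOn_mul ((continuous_const.sub continuous_id).continuousOn)
  have hF2 : IntervalIntegrable (fun s => ((t - s) * lam s) • S) volume 0 t :=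
    ⟨hmul.1.smul_const S, hmul.2.smul_const S⟩
  have hpt : (fun s => (t - s) • (Δ.mulVec (X s) + lam s • S))
      = fun s => (t - s) • Δ.mulVec (X s) + ((t - s) * lam s) • S := by
    funext s; rw [smul_add, smul_smul]
  have hint : IntervalIntegrable
      (fun s => (t - s) • (Δ.mulVec (X s) + lam s • S)) volume 0 t := by
    rw [hpt]; exact hF1.add hF2
  rw [hXeq t ⟨ht0, htT⟩, add_dotProduct, add_dotProduct, smul_dotProduct, smul_eq_mul,
    dot_intervalIntegral vn hint]
  congr 1
  apply intervalIntegral.integral_congr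
  intro s _
  simp [smul_dotProduct, add_dotProduct, hdot, smul_eq_mul]
  ring



lemma volterra_shift {c T q : ℝ} (h0c : 0 < c) (hcT : c < T) {u gg : ℝ → ℝ}
    (hu : ContinuousOn u (Icc 0 T))
    (hggII : ∀ w₁ w₂ : ℝ, 0 ≤ w₁ → w₁ ≤ w₂ → w₂ ≤ T → IntervalIntegrable gg volume w₁ w₂)
    (hvan : ∀ᵐ s ∂(volume.restrict (Ioo c T)), gg s = 0)
    (hvol : ∀ t ∈ Icc (0:ℝ) T, u t = ∫ s in (0:ℝ)..t, (t - s) * (q * u s + gg s)) :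
    ∃ α β : ℝ, ∀ t ∈ Icc c T, u t = α + β * (t - c) + q * ∫ s in c..t, (t - s) * u s := by
  have h0c' := h0c.le
  have hcT' := hcT.le
  refine ⟨∫ s in (0:ℝ)..c, (c - s) * (q * u s + gg s), ∫ s in (0:ℝ)..c, (q * u s + gg s), ?_⟩
  rintro t ⟨hct, htT⟩
  have h0t : (0:ℝ) ≤ t := le_trans h0c' hct
  -- basic interval integrabilities
  have huII : ∀ w₁ w₂ : ℝ, 0 ≤ w₁ → w₁ ≤ w₂ → w₂ ≤ T → IntervalIntegrable u volume w₁ w₂ := by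
    intro w₁ w₂ a1 a2 a3
    exact (hu.mono (Icc_subset_Icc a1 a3)).intervalIntegrable_of_Icc a2
  have hhII : ∀ w₁ w₂ : ℝ, 0 ≤ w₁ → w₁ ≤ w₂ → w₂ ≤ T →
      IntervalIntegrable (fun s => q * u s + gg s) volume w₁ w₂ := by
    intro w₁ w₂ a1 a2 a3
    exact ((huII w₁ w₂ a1 a2 a3).const_mul q).add (hggII w₁ w₂ a1 a2 a3)
  have hmulII : ∀ (r w₁ w₂ : ℝ), 0 ≤ w₁ → w₁ ≤ w₂ → w₂ ≤ T →
      IntervalIntegrable (fun s => (r - s) * (q * u s + gg s)) volume w₁ w₂ := by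
    intro r w₁ w₂ a1 a2 a3
    exact (hhII w₁ w₂ a1 a2 a3).continuousOn_mul
      ((continuous_const.sub continuous_id).continuousOn)
  have e0 : ∫ s in (0:ℝ)..t, (t - s) * (q * u s + gg s)
      = (∫ s in (0:ℝ)..c, (t - s) * (q * u s + gg s))
        + ∫ s in c..t, (t - s) * (q * u s + gg s) :=
    (intervalIntegral.integral_add_adjacent_intervals (hmulII t 0 c le_rfl h0c' hcT')
      (hmulII t c t h0c' hct htT)).symm
  have e1 : ∫ s in (0:ℝ)..c, (t - s) * (q * u s + gg s)
      = (∫ s in (0:ℝ)..c, (c - s) * (q * u s + gg s))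
        + (t - c) * ∫ s in (0:ℝ)..c, (q * u s + gg s) := by
    rw [← intervalIntegral.integral_const_mul,
      ← intervalIntegral.integral_add (hmulII c 0 c le_rfl h0c' hcT')
        ((hhII 0 c le_rfl h0c' hcT').const_mul (t - c))]
    apply intervalIntegral.integral_congr
    intro s _
    ring
  have hvanIoc : ∀ᵐ s ∂(volume.restrict (Ioc c t)), gg s = 0 := by
    have h1 : ∀ᵐ s ∂(volume.restrict (Ioo c t)), gg s = 0 :=
      ae_restrict_of_ae_restrict_of_subset (Ioo_subset_Ioo le_rfl htT) hvan
    rwa [Measure.restrict_congr_set Ioo_ae_eq_Ioc] at h1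
  have e2 : ∫ s in c..t, (t - s) * (q * u s + gg s) = q * ∫ s in c..t, (t - s) * u s := by
    rw [← intervalIntegral.integral_const_mul]
    apply intervalIntegral.integral_congr_ae
    have := (ae_restrict_iff' measurableSet_Ioc).mp hvanIoc
    filter_upwards [this] with s hs hmem
    rw [uIoc_of_le hct] at hmem
    rw [hs hmem]
    ring
  rw [hvol t ⟨h0t, htT⟩, e0, e1, e2]
  ring

lemma volterra_deriv {c T α β q : ℝ} (h0c : 0 ≤ c) (hcT : c < T) {u : ℝ → ℝ}
    (hu : ContinuousOn u (Icc 0 T)) (hc0 : 0 < c)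
    (hvolc : ∀ t ∈ Icc c T, u t = α + β * (t - c) + q * ∫ s in c..t, (t - s) * u s) :
    (∀ t ∈ Ioo c T, HasDerivAt u (β + q * ∫ s in c..t, u s) t) ∧
    (∀ t ∈ Ioo c T, HasDerivAt (fun r => β + q * ∫ s in c..r, u s) (q * u t) t) := by
  have huO : ContinuousOn u (Ioo 0 T) := hu.mono Ioo_subset_Icc_self
  have hmemO : ∀ t ∈ Ioo c T, t ∈ Ioo (0:ℝ) T := fun t ht => ⟨lt_of_le_of_lt h0c ht.1, ht.2⟩
  have hFTC1 : ∀ t ∈ Ioo c T, HasDerivAt (fun r => ∫ s in c..r, u s) (u t) t := by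
    intro t ht
    refine intervalIntegral.integral_hasDerivAt_right
      ((hu.mono (Icc_subset_Icc h0c ht.2.le)).intervalIntegrable_of_Icc ht.1.le)
      (ContinuousOn.stronglyMeasurableAtFilter isOpen_Ioo huO t (hmemO t ht))
      (huO.continuousAt (isOpen_Ioo.mem_nhds (hmemO t ht)))
  have hFTC2 : ∀ t ∈ Ioo c T, HasDerivAt (fun r => ∫ s in c..r, s * u s) (t * u t) t := by
    intro t ht
    have hcont : ContinuousOn (fun s => s * u s) (Ioo 0 T) := continuousOn_id.mul huO
    have hII2 : IntervalIntegrable (fun s => s * u s) volume c t :=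
      ((hu.mono (Icc_subset_Icc h0c ht.2.le)).intervalIntegrable_of_Icc ht.1.le).continuousOn_mul
        continuousOn_id
    refine intervalIntegral.integral_hasDerivAt_right hII2
      (ContinuousOn.stronglyMeasurableAtFilter isOpen_Ioo hcont t (hmemO t ht))
      (hcont.continuousAt (isOpen_Ioo.mem_nhds (hmemO t ht)))
  have hw' : ∀ r ∈ Icc c T, u r
      = α + β * (r - c) + q * (r * (∫ s in c..r, u s) - ∫ s in c..r, s * u s) := by
    rintro r ⟨hcr, hrT⟩
    have huIIcr : IntervalIntegrable u volume c r :=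
      (hu.mono (Icc_subset_Icc h0c hrT)).intervalIntegrable_of_Icc hcr
    have hIIr2 : IntervalIntegrable (fun s => s * u s) volume c r :=
      huIIcr.continuousOn_mul continuousOn_id
    have hIIr1 : IntervalIntegrable (fun s => r * u s) volume c r := huIIcr.const_mul r
    have e : ∫ s in c..r, (r - s) * u s
        = r * (∫ s in c..r, u s) - ∫ s in c..r, s * u s := by
      rw [← intervalIntegral.integral_const_mul,
        ← intervalIntegral.integral_sub hIIr1 hIIr2]
      apply intervalIntegral.integral_congr
      intro s _
      ring
    rw [hvolc r ⟨hcr, hrT⟩, e]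
  constructor
  · intro t ht
    have hw : HasDerivAt
        (fun r => α + β * (r - c) + q * (r * (∫ s in c..r, u s) - ∫ s in c..r, s * u s))
        (β + q * ∫ s in c..t, u s) t := by
      have h1 : HasDerivAt (fun r : ℝ => α + β * (r - c)) β t := by
        simpa using (((hasDerivAt_id t).sub_const c).const_mul β).const_add α
      have h2 : HasDerivAt (fun r => r * ∫ s in c..r, u s)
          (1 * (∫ s in c..t, u s) + t * u t) t :=
        (hasDerivAt_id t).mul (hFTC1 t ht)
      have h3 := (h2.sub (hFTC2 t ht)).const_mul q
      have := h1.add h3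
      refine this.congr_deriv ?_
      ring
    refine hw.congr_of_eventuallyEq ?_ |>.congr_deriv rfl
    exact Filter.eventuallyEq_of_mem (isOpen_Ioo.mem_nhds ht)
      (fun r hr => hw' r ⟨hr.1.le, hr.2.le⟩)
  · intro t ht
    exact ((hFTC1 t ht).const_mul q).const_add β


lemma deriv_zero_on_open {I : Set ℝ} (hI : IsOpen I) {F F' : ℝ → ℝ}
    (hzero : ∀ t ∈ I, F t = 0) (hderiv : ∀ t ∈ I, HasDerivAt F (F' t) t) :
    ∀ t ∈ I, F' t = 0 := fun t ht =>
  (hderiv t ht).unique <| (hasDerivAt_const t (0:ℝ)).congr_of_eventuallyEq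
    (Filter.eventuallyEq_of_mem (hI.mem_nhds ht) hzero)

lemma expand_basis {N : ℕ} {v : Fin N → Fin N → ℝ}
    (horth : ∀ n m, v n ⬝ᵥ v m = if n = m then 1 else 0)
    (x : Fin N → ℝ) (k : Fin N) :
    ∑ m : Fin N, v m k * (x ⬝ᵥ v m) = x k := by
  classical
  set V : Matrix (Fin N) (Fin N) ℝ := Matrix.of v with hV
  have hVVt : V * Vᵀ = 1 := by
    ext n m
    simpa [Matrix.mul_apply, Matrix.one_apply, dotProduct, V] using horth n m
  have hVtV : Vᵀ * V = 1 := mul_eq_one_comm.mp hVVt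
  have e1 : ∑ m : Fin N, v m k * (x ⬝ᵥ v m) = (Vᵀ *ᵥ (V *ᵥ x)) k := by
    simp only [Matrix.mulVec, dotProduct, Matrix.transpose_apply, Matrix.of_apply, V]
    exact Finset.sum_congr rfl fun m _ => by
      congr 1
      exact Finset.sum_congr rfl fun j _ => mul_comm _ _
  rw [e1, Matrix.mulVec_mulVec, hVtV, Matrix.one_mulVec]

end FinalStateAux

/-- **Theorem 4.1.** Records on a strategic set of nodes determine the final state `X(T)`:
if two solutions driven by admissible sources with the same initial data agree on every node of
a strategic set for all `t ∈ (0,T)`, then their final states at `T` coincide. -/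
theorem final_state_uniqueness
    {N : ℕ} (hN : 2 ≤ N)
    (Δ : Matrix (Fin N) (Fin N) ℝ) (hsymm : Δ.IsSymm)
    (ω : Fin N → ℝ) (v : Fin N → Fin N → ℝ)
    (hω0 : ω ⟨0, by omega⟩ = 0) (hωmono : StrictMono ω)
    (horth : ∀ n m : Fin N, v n ⬝ᵥ v m = if n = m then 1 else 0)
    (heig : ∀ n : Fin N, Δ.mulVec (v n) = (-(ω n) ^ 2) • v n)
    (T : ℝ) (hT : 0 < T)
    (a b : Fin N → ℝ)
    (lam₁ lam₂ : ℝ → ℝ) (S₁ S₂ : Fin N → ℝ)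
    (hadm₁ : AdmissiblePair N T lam₁ S₁) (hadm₂ : AdmissiblePair N T lam₂ S₂)
    (X₁ X₂ : ℝ → Fin N → ℝ)
    (hX₁ : IsWaveSolution Δ T lam₁ S₁ a b X₁) (hX₂ : IsWaveSolution Δ T lam₂ S₂ a b X₂)
    (K : Finset (Fin N)) (hstrat : ∀ n : Fin N, ∃ k ∈ K, v n k ≠ 0)
    (hagree : ∀ k ∈ K, ∀ t ∈ Ioo (0:ℝ) T, X₁ t k = X₂ t k) :
    X₁ T = X₂ T := by

  classical
  obtain ⟨hL₁, ⟨T₁, hT₁mem, hvan₁⟩, -⟩ := hadm₁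
  obtain ⟨hL₂, ⟨T₂, hT₂mem, hvan₂⟩, -⟩ := hadm₂
  have hX₁c := hX₁.1
  have hX₂c := hX₂.1
  set c := max T₁ T₂ with hcdef
  have hc0 : 0 < c := lt_max_of_lt_left hT₁mem.1
  have hcT : c < T := max_lt hT₁mem.2 hT₂mem.2
  -- integrability of the sources
  have hlam₁int : IntegrableOn lam₁ (Ioc 0 T) volume :=
    IntegrableOn.congr_set_ae (t := Ioo 0 T) (hL₁.integrable one_le_two) Ioo_ae_eq_Ioc.symm
  have hlam₂int : IntegrableOn lam₂ (Ioc 0 T) volume :=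
    IntegrableOn.congr_set_ae (t := Ioo 0 T) (hL₂.integrable one_le_two) Ioo_ae_eq_Ioc.symm
  have hlamII : ∀ (lam : ℝ → ℝ), IntegrableOn lam (Ioc 0 T) volume →
      ∀ w₁ w₂ : ℝ, 0 ≤ w₁ → w₁ ≤ w₂ → w₂ ≤ T → IntervalIntegrable lam volume w₁ w₂ := by
    intro lam hl w₁ w₂ a1 a2 a3
    exact (intervalIntegrable_iff_integrableOn_Ioc_of_le a2).2
      (hl.mono_set (Ioc_subset_Ioc a1 a3))
  -- continuity of projections
  have hYc : ContinuousOn (fun t => X₁ t - X₂ t) (Icc 0 T) := hX₁c.sub hX₂c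
  have hyc : ∀ n : Fin N, ContinuousOn (fun t => (X₁ t - X₂ t) ⬝ᵥ v n) (Icc 0 T) := fun n =>
    (FinalStateAux.dotCLM (v n)).continuous.comp_continuousOn hYc
  -- scalar Volterra equation for the difference
  have hyvol : ∀ n : Fin N, ∀ t ∈ Icc (0:ℝ) T,
      (X₁ t - X₂ t) ⬝ᵥ v n = ∫ s in (0:ℝ)..t, (t - s) *
        (-(ω n) ^ 2 * ((X₁ s - X₂ s) ⬝ᵥ v n)
          + (lam₁ s * (S₁ ⬝ᵥ v n) - lam₂ s * (S₂ ⬝ᵥ v n))) := by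
    intro n t ht
    obtain ⟨h0t, htT⟩ := ht
    have h1 := FinalStateAux.scalar_volterra Δ hsymm hlam₁int hX₁ (heig n) t ⟨h0t, htT⟩
    have h2 := FinalStateAux.scalar_volterra Δ hsymm hlam₂int hX₂ (heig n) t ⟨h0t, htT⟩
    have hIIint : ∀ (lam : ℝ → ℝ) (S : Fin N → ℝ) (X : ℝ → Fin N → ℝ),
        IntegrableOn lam (Ioc 0 T) volume → ContinuousOn X (Icc 0 T) →
        IntervalIntegrable
          (fun s => (t - s) * (-(ω n) ^ 2 * (X s ⬝ᵥ v n) + lam s * (S ⬝ᵥ v n)))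
          volume 0 t := by
      intro lam S X hl hXc
      have hxc : ContinuousOn (fun s => X s ⬝ᵥ v n) (Icc 0 t) :=
        (FinalStateAux.dotCLM (v n)).continuous.comp_continuousOn
          (hXc.mono (Icc_subset_Icc_right htT))
      have hA : IntervalIntegrable (fun s => -(ω n) ^ 2 * (X s ⬝ᵥ v n)) volume 0 t :=
        (continuousOn_const.mul hxc).intervalIntegrable_of_Icc h0t
      have hB : IntervalIntegrable (fun s => lam s * (S ⬝ᵥ v n)) volume 0 t :=
        (hlamII lam hl 0 t le_rfl h0t htT).mul_const _
      exact (hA.add hB).continuousOn_mul (continuous_const.sub continuous_id).continuousOn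
    have hi₁ := hIIint lam₁ S₁ X₁ hlam₁int hX₁c
    have hi₂ := hIIint lam₂ S₂ X₂ hlam₂int hX₂c
    have e : ∫ s in (0:ℝ)..t, (t - s) *
        (-(ω n) ^ 2 * ((X₁ s - X₂ s) ⬝ᵥ v n)
          + (lam₁ s * (S₁ ⬝ᵥ v n) - lam₂ s * (S₂ ⬝ᵥ v n)))
        = (∫ s in (0:ℝ)..t, (t - s) * (-(ω n) ^ 2 * (X₁ s ⬝ᵥ v n) + lam₁ s * (S₁ ⬝ᵥ v n)))
          - ∫ s in (0:ℝ)..t, (t - s) * (-(ω n) ^ 2 * (X₂ s ⬝ᵥ v n) + lam₂ s * (S₂ ⬝ᵥ v n)) := by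
      rw [← intervalIntegral.integral_sub hi₁ hi₂]
      apply intervalIntegral.integral_congr
      intro s _
      simp only [sub_dotProduct]
      ring
    rw [sub_dotProduct, h1, h2, e]
    ring
  -- shift the base point to c
  have hvanc : ∀ n : Fin N, ∀ᵐ s ∂(volume.restrict (Ioo c T)),
      lam₁ s * (S₁ ⬝ᵥ v n) - lam₂ s * (S₂ ⬝ᵥ v n) = 0 := by
    intro n
    have h1 : ∀ᵐ s ∂(volume.restrict (Ioo c T)), lam₁ s = 0 :=
      ae_restrict_of_ae_restrict_of_subset (Ioo_subset_Ioo (le_max_left _ _) le_rfl) hvan₁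
    have h2 : ∀ᵐ s ∂(volume.restrict (Ioo c T)), lam₂ s = 0 :=
      ae_restrict_of_ae_restrict_of_subset (Ioo_subset_Ioo (le_max_right _ _) le_rfl) hvan₂
    filter_upwards [h1, h2] with s e1 e2
    rw [e1, e2]
    ring
  have hshift : ∀ n : Fin N, ∃ α β : ℝ, ∀ t ∈ Icc c T,
      (X₁ t - X₂ t) ⬝ᵥ v n = α + β * (t - c)
        + -(ω n) ^ 2 * ∫ s in c..t, (t - s) * ((X₁ s - X₂ s) ⬝ᵥ v n) := fun n =>
    FinalStateAux.volterra_shift hc0 hcT (hyc n)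
      (fun w₁ w₂ a1 a2 a3 => ((hlamII lam₁ hlam₁int w₁ w₂ a1 a2 a3).mul_const _).sub
        ((hlamII lam₂ hlam₂int w₁ w₂ a1 a2 a3).mul_const _))
      (hvanc n) (hyvol n)
  choose α β hαβ using hshift
  have hderivs := fun n : Fin N =>
    FinalStateAux.volterra_deriv hc0.le hcT (hyc n) hc0 (hαβ n)
  set D : Fin N → ℝ → ℝ :=
    fun n r => β n + -(ω n) ^ 2 * ∫ s in c..r, (X₁ s - X₂ s) ⬝ᵥ v n with hD
  have hyD : ∀ n : Fin N, ∀ t ∈ Ioo c T,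
      HasDerivAt (fun r => (X₁ r - X₂ r) ⬝ᵥ v n) (D n t) t := fun n => (hderivs n).1
  have hDD : ∀ n : Fin N, ∀ t ∈ Ioo c T,
      HasDerivAt (D n) (-(ω n) ^ 2 * ((X₁ t - X₂ t) ⬝ᵥ v n)) t := fun n => (hderivs n).2
  -- injectivity of eigenvalues
  have hωnn : ∀ m : Fin N, 0 ≤ ω m := by
    intro m
    have h0m : (⟨0, by omega⟩ : Fin N) ≤ m := by simp [Fin.le_def]
    have := hωmono.monotone h0m
    rwa [hω0] at this
  have hinj : Function.Injective (fun m : Fin N => -(ω m) ^ 2) := by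
    intro m₁ m₂ hmm
    simp only [neg_inj] at hmm
    exact hωmono.injective ((sq_eq_sq₀ (hωnn m₁) (hωnn m₂)).mp hmm)
  -- vanishing of all modes on (c, T)
  have hyzero : ∀ n₀ : Fin N, ∀ t ∈ Ioo c T, (X₁ t - X₂ t) ⬝ᵥ v n₀ = 0 := by
    intro n₀
    obtain ⟨k, hkK, hk0⟩ := hstrat n₀
    have hbase : ∀ t ∈ Ioo c T,
        ∑ m : Fin N, v m k * ((X₁ t - X₂ t) ⬝ᵥ v m) = 0 := by
      intro t ht
      have htI : t ∈ Ioo (0:ℝ) T := ⟨lt_trans hc0 ht.1, ht.2⟩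
      rw [FinalStateAux.expand_basis horth (X₁ t - X₂ t) k]
      have := hagree k hkK t htI
      simp [this]
    have hind : ∀ j : ℕ, ∀ t ∈ Ioo c T,
        ∑ m : Fin N, v m k * (-(ω m) ^ 2) ^ j * ((X₁ t - X₂ t) ⬝ᵥ v m) = 0 := by
      intro j
      induction j with
      | zero =>
        intro t ht
        simpa using hbase t ht
      | succ j ih =>
        have step1 : ∀ t ∈ Ioo c T,
            ∑ m : Fin N, v m k * (-(ω m) ^ 2) ^ j * D m t = 0 := by
          apply FinalStateAux.deriv_zero_on_open isOpen_Ioo ih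
          intro t ht
          exact HasDerivAt.fun_sum (fun m _ => (hyD m t ht).const_mul _)
        have step2 : ∀ t ∈ Ioo c T,
            ∑ m : Fin N, v m k * (-(ω m) ^ 2) ^ j
              * (-(ω m) ^ 2 * ((X₁ t - X₂ t) ⬝ᵥ v m)) = 0 := by
          apply FinalStateAux.deriv_zero_on_open isOpen_Ioo step1
          intro t ht
          exact HasDerivAt.fun_sum (fun m _ => (hDD m t ht).const_mul _)
        intro t ht
        rw [← step2 t ht]
        apply Finset.sum_congr rfl
        intro m _
        ring
    have hpoly : ∀ p : Polynomial ℝ, ∀ t ∈ Ioo c T,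
        ∑ m : Fin N, v m k * p.eval (-(ω m) ^ 2) * ((X₁ t - X₂ t) ⬝ᵥ v m) = 0 := by
      intro p
      induction p using Polynomial.induction_on' with
      | add p q hp hq =>
        intro t ht
        have e : ∀ m : Fin N, m ∈ Finset.univ →
            v m k * (p + q).eval (-(ω m) ^ 2) * ((X₁ t - X₂ t) ⬝ᵥ v m)
              = v m k * p.eval (-(ω m) ^ 2) * ((X₁ t - X₂ t) ⬝ᵥ v m)
                + v m k * q.eval (-(ω m) ^ 2) * ((X₁ t - X₂ t) ⬝ᵥ v m) := by
          intro m _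
          rw [Polynomial.eval_add]
          ring
        rw [Finset.sum_congr rfl e, Finset.sum_add_distrib, hp t ht, hq t ht, add_zero]
      | monomial j aa =>
        intro t ht
        have e : ∀ m : Fin N, m ∈ Finset.univ →
            v m k * (Polynomial.monomial j aa).eval (-(ω m) ^ 2) * ((X₁ t - X₂ t) ⬝ᵥ v m)
              = aa * (v m k * (-(ω m) ^ 2) ^ j * ((X₁ t - X₂ t) ⬝ᵥ v m)) := by
          intro m _
          rw [Polynomial.eval_monomial]
          ring
        rw [Finset.sum_congr rfl e, ← Finset.mul_sum, hind j t ht, mul_zero]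
    intro t ht
    have hp := hpoly (Lagrange.basis Finset.univ (fun m : Fin N => -(ω m) ^ 2) n₀) t ht
    have heval1 : (Lagrange.basis Finset.univ (fun m : Fin N => -(ω m) ^ 2) n₀).eval
        (-(ω n₀) ^ 2) = 1 :=
      Lagrange.eval_basis_self hinj.injOn (Finset.mem_univ _)
    have heval0 : ∀ m : Fin N, m ≠ n₀ →
        (Lagrange.basis Finset.univ (fun m : Fin N => -(ω m) ^ 2) n₀).eval
          (-(ω m) ^ 2) = 0 := fun m hm =>
      Lagrange.eval_basis_of_ne (v := fun m : Fin N => -(ω m) ^ 2) (Ne.symm hm) (Finset.mem_univ _)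
    rw [Finset.sum_eq_single n₀ (fun m _ hm => by rw [heval0 m hm]; ring)
      (fun hn => absurd (Finset.mem_univ n₀) hn)] at hp
    rw [heval1, mul_one] at hp
    exact (mul_eq_zero.mp hp).resolve_left hk0
  -- pass to the limit t → T
  have hyT : ∀ n : Fin N, (X₁ T - X₂ T) ⬝ᵥ v n = 0 := by
    intro n
    have hcw : ContinuousWithinAt (fun t => (X₁ t - X₂ t) ⬝ᵥ v n) (Ioo c T) T :=
      ((hyc n) T (right_mem_Icc.mpr (le_of_lt (lt_trans hc0 hcT)))).mono
        (fun x hx => ⟨(hc0.trans hx.1).le, hx.2.le⟩)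
    have hne : (nhdsWithin T (Ioo c T)).NeBot := by
      rw [← mem_closure_iff_nhdsWithin_neBot, closure_Ioo hcT.ne]
      exact right_mem_Icc.mpr hcT.le
    have h0 : Filter.Tendsto (fun t => (X₁ t - X₂ t) ⬝ᵥ v n)
        (nhdsWithin T (Ioo c T)) (nhds 0) := by
      apply Filter.Tendsto.congr' _ tendsto_const_nhds
      filter_upwards [self_mem_nhdsWithin] with t ht
      exact (hyzero n t ht).symm
    exact tendsto_nhds_unique hcw h0
  -- conclude
  funext kk
  have hz : (X₁ T - X₂ T) kk = 0 := by
    rw [← FinalStateAux.expand_basis horth (X₁ T - X₂ T) kk]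
    exact Finset.sum_eq_zero fun m _ => by rw [hyT m, mul_zero]
  have := sub_eq_zero.mp (by simpa [Pi.sub_apply] using hz)
  exact this
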